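/- Let I be a monomial ideal of R = K[x_1,…,x_n], let p be a monomial prime ideal of R, let t ≥ 1 be an integer, and let y_1,…,y_s be distinct variables of R such that for each i = 1,…,s there exist an integer α_i ≥ 1 and a monomial ideal J_i of R with y_i ∉ supp(J_i), I^t + (y_i^{α_i}) = J_i + (y_i^{α_i}), and p∖y_i ∉ Ass(R/J_i). Then p ∈ Ass(R/I^t) if and only if p ∈ Ass(R/(I^t : ∏_{i=1}^s y_i^{α_i})). -/

import Mathlib

open MvPolynomial

/-- `I` is an ideal of `K[x_1,…,x_n]` generated by monomials. -/
def IsMonomialIdeal {K : Type*} [Field K] {n : ℕ}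
    (I : Ideal (MvPolynomial (Fin n) K)) : Prop :=
  ∃ S : Set (Fin n →₀ ℕ),
    I = Ideal.span ((fun e => MvPolynomial.monomial e (1 : K)) '' S)

/-- `I` is a monomial ideal admitting a monomial generating set in which no
monomial is divisible by a variable `x_i` with `i ∈ A`; equivalently, `I` is a
monomial ideal whose support is disjoint from `A`. -/
def MonomialIdealAvoiding {K : Type*} [Field K] {n : ℕ} (A : Set (Fin n))
    (I : Ideal (MvPolynomial (Fin n) K)) : Prop :=
  ∃ S : Set (Fin n →₀ ℕ), (∀ e ∈ S, ∀ i ∈ A, e i = 0) ∧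
    I = Ideal.span ((fun e => MvPolynomial.monomial e (1 : K)) '' S)

namespace MICC

/-- generic commutative-ring lemmas -/

lemma ann_mk {A : Type*} [CommRing A] (L : Ideal A) (u : A) :
    (Submodule.span A {(Ideal.Quotient.mk L u : A ⧸ L)}).annihilator
      = L.colon (Ideal.span {u}) := by
  have key : ∀ r : A, r • (Ideal.Quotient.mk L u : A ⧸ L) = Ideal.Quotient.mk L (r * u) := by
    intro r; rfl
  ext r
  rw [Submodule.mem_annihilator_span_singleton, Ideal.mem_colon_span_singleton, key,
    Ideal.Quotient.eq_zero_iff_mem]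

lemma colon_bot_mk {A : Type*} [CommRing A] (L : Ideal A) (u : A) :
    (⊥ : Submodule A (A ⧸ L)).colon {(Ideal.Quotient.mk L u : A ⧸ L)}
      = L.colon (Ideal.span {u}) := by
  have key : ∀ r : A, r • (Ideal.Quotient.mk L u : A ⧸ L) = Ideal.Quotient.mk L (r * u) := by
    intro r; rfl
  ext r
  rw [Submodule.mem_colon_singleton, Submodule.mem_bot, key, Ideal.Quotient.eq_zero_iff_mem,
    Ideal.mem_colon_span_singleton]

lemma mem_ass_quot_iff {A : Type*} [CommRing A] [IsNoetherianRing A] (L p : Ideal A) :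
    p ∈ associatedPrimes A (A ⧸ L) ↔ p.IsPrime ∧ ∃ u : A, p = L.colon (Ideal.span {u}) := by
  constructor
  · intro h
    obtain ⟨hp, x, hx⟩ := isAssociatedPrime_iff.mp h
    obtain ⟨u, rfl⟩ := Ideal.Quotient.mk_surjective x
    exact ⟨hp, u, by rwa [colon_bot_mk] at hx⟩
  · rintro ⟨hp, u, hu⟩
    exact isAssociatedPrime_iff.mpr ⟨hp, Ideal.Quotient.mk L u, by rwa [colon_bot_mk]⟩

lemma colon_colon {A : Type*} [CommRing A] (L : Ideal A) (a b : A) :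
    (L.colon (Ideal.span {a})).colon (Ideal.span {b}) = L.colon (Ideal.span {a * b}) := by
  ext r
  rw [Ideal.mem_colon_span_singleton, Ideal.mem_colon_span_singleton, Ideal.mem_colon_span_singleton,
    mul_assoc, mul_comm b a]

lemma colon_one {A : Type*} [CommRing A] (L : Ideal A) :
    L.colon (Ideal.span {(1 : A)}) = L := by
  ext r; rw [Ideal.mem_colon_span_singleton, mul_one]

lemma ass_of_ass_colon {A : Type*} [CommRing A] [IsNoetherianRing A] {L : Ideal A} {g : A} {p : Ideal A}
    (h : p ∈ associatedPrimes A (A ⧸ L.colon (Ideal.span {g}))) :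
    p ∈ associatedPrimes A (A ⧸ L) := by
  obtain ⟨hp, u, hu⟩ := (mem_ass_quot_iff _ _).mp h
  rw [colon_colon] at hu
  exact (mem_ass_quot_iff _ _).mpr ⟨hp, g * u, hu⟩

lemma dichotomy {A : Type*} [CommRing A] (L : Ideal A) (p : Ideal A) (hp : p.IsPrime)
    (u f : A) (hu : p = L.colon (Ideal.span {u})) :
    (∃ b, p = L.colon (Ideal.span {f * b})) ∨
      p = (L + Ideal.span {f}).colon (Ideal.span {u}) := by
  by_cases hc : ∃ a b, a * u - f * b ∈ L ∧ a * u ∉ L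
  · obtain ⟨a, b, hab, hau⟩ := hc
    left
    refine ⟨b, ?_⟩
    have ha : a ∉ p := fun h => hau (Ideal.mem_colon_span_singleton.mp (hu ▸ h))
    ext r
    rw [Ideal.mem_colon_span_singleton]
    constructor
    · intro hr
      have h1 : r * a * u ∈ L := Ideal.mem_colon_span_singleton.mp (hu ▸ p.mul_mem_right a hr)
      have h2 : r * (a * u - f * b) ∈ L := L.mul_mem_left r hab
      have := L.sub_mem h1 h2
      have heq : r * a * u - r * (a * u - f * b) = r * (f * b) := by ring
      rwa [heq] at this
    · intro hr
      have h2 : r * (a * u - f * b) ∈ L := L.mul_mem_left r hab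
      have := L.add_mem hr h2
      have heq : r * (f * b) + r * (a * u - f * b) = r * a * u := by ring
      rw [heq] at this
      have hra : r * a ∈ p := hu ▸ Ideal.mem_colon_span_singleton.mpr this
      exact (hp.mem_or_mem hra).resolve_right ha
  · right
    push_neg at hc
    ext r
    rw [Ideal.mem_colon_span_singleton]
    constructor
    · intro hr
      have : r * u ∈ L := Ideal.mem_colon_span_singleton.mp (hu ▸ hr)
      exact Submodule.mem_sup_left this
    · intro hr
      rw [Submodule.add_eq_sup, Submodule.mem_sup] at hr
      obtain ⟨l, hl, z, hz, hsum⟩ := hr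
      obtain ⟨b, rfl⟩ := Ideal.mem_span_singleton'.mp hz
      have hmem : r * u - f * b ∈ L := by
        have : r * u - f * b = l + (b * f) - f * b := by rw [hsum]
        rw [this]
        have : l + b * f - f * b = l := by ring
        rwa [this]
      have := hc r b hmem
      exact hu ▸ Ideal.mem_colon_span_singleton.mpr this

variable {K : Type*} [Field K] {n : ℕ}

/-- The monomial ideal with exponent set `E`. -/
noncomputable def q (K : Type*) [Field K] {n : ℕ} (E : Set (Fin n →₀ ℕ)) : Ideal (MvPolynomial (Fin n) K) :=
  Ideal.span ((fun e => MvPolynomial.monomial e (1 : K)) '' E)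

lemma mem_q {E : Set (Fin n →₀ ℕ)} {f : MvPolynomial (Fin n) K} :
    f ∈ q K E ↔ ∀ w ∈ f.support, ∃ e ∈ E, e ≤ w :=
  mem_ideal_span_monomial_image

lemma mono_mem_q {E : Set (Fin n →₀ ℕ)} {m : Fin n →₀ ℕ} :
    monomial m (1 : K) ∈ q K E ↔ ∃ e ∈ E, e ≤ m := by
  rw [mem_q]
  classical
  rw [support_monomial, if_neg one_ne_zero]
  simp

lemma q_union (E1 E2 : Set (Fin n →₀ ℕ)) : q K (E1 ∪ E2) = q K E1 + q K E2 := by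
  rw [q, Set.image_union, Ideal.span_union, Submodule.add_eq_sup]; rfl

lemma q_singleton (s : Fin n →₀ ℕ) :
    q K {s} = Ideal.span {monomial s (1 : K)} := by
  rw [q, Set.image_singleton]

lemma q_mul (E1 E2 : Set (Fin n →₀ ℕ)) :
    q K E1 * q K E2 = q K (Set.image2 (· + ·) E1 E2) := by
  rw [q, q, q, Ideal.span_mul_span']
  congr 1
  rw [← Set.image2_mul, Set.image2_image_left, Set.image2_image_right, Set.image_image2]
  apply Set.image2_congr
  intro a ha b hb
  rw [monomial_mul, one_mul]

lemma pow_q (E : Set (Fin n →₀ ℕ)) (t : ℕ) (ht : 1 ≤ t) :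
    ∃ E', q K E ^ t = q K E' := by
  induction t, ht using Nat.le_induction with
  | base => exact ⟨E, by rw [pow_one]⟩
  | succ t ht ih =>
    obtain ⟨E', hE'⟩ := ih
    exact ⟨Set.image2 (· + ·) E' E, by rw [pow_succ, hE', q_mul]⟩

lemma q_colon_mono (E : Set (Fin n →₀ ℕ)) (γ : Fin n →₀ ℕ) :
    (q K E).colon (Ideal.span {monomial γ (1 : K)}) = q K ((fun e => e - γ) '' E) := by
  ext f
  rw [Ideal.mem_colon_span_singleton, mem_q, mem_q]
  constructor
  · intro h w hw
    have hsup : w + γ ∈ (f * monomial γ (1 : K)).support := by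
      rw [mem_support_iff, coeff_mul_monomial, mul_one]
      exact mem_support_iff.mp hw
    obtain ⟨e, he, hle⟩ := h _ hsup
    exact ⟨e - γ, ⟨e, he, rfl⟩, tsub_le_iff_right.mpr hle⟩
  · intro h w hw
    rw [mem_support_iff, coeff_mul_monomial'] at hw
    split_ifs at hw with hγ
    · rw [mul_one] at hw
      obtain ⟨e', ⟨e, he, rfl⟩, hle⟩ := h (w - γ) (mem_support_iff.mpr hw)
      refine ⟨e, he, ?_⟩
      have := tsub_le_iff_right.mp hle
      rwa [tsub_add_cancel_of_le hγ] at this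
    · exact absurd rfl hw

lemma X_mul_mono (x : Fin n) (m : Fin n →₀ ℕ) :
    (X x : MvPolynomial (Fin n) K) * monomial m 1 = monomial (Finsupp.single x 1 + m) 1 := by
  rw [X, monomial_mul, one_mul]

lemma isPrime_span_X (S : Set (Fin n)) :
    (Ideal.span ((X : Fin n → MvPolynomial (Fin n) K) '' S)).IsPrime := by
  classical
  let φ : MvPolynomial (Fin n) K →+* MvPolynomial (Fin n) K :=
    (aeval fun i => if i ∈ S then 0 else X i).toRingHom
  have hmono : ∀ (w : Fin n →₀ ℕ) (c : K),
      φ (monomial w c) = if ∀ i ∈ S, w i = 0 then monomial w c else 0 := by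
    intro w c
    show (aeval fun i => if i ∈ S then 0 else X i) (monomial w c) = _
    rw [aeval_monomial]
    split_ifs with hcond
    · have : (w.prod fun i e => (if i ∈ S then (0 : MvPolynomial (Fin n) K) else X i) ^ e)
          = w.prod fun i e => (X i) ^ e := by
        apply Finsupp.prod_congr
        intro i hi
        rw [if_neg]
        intro hiS
        exact absurd (hcond i hiS) (Finsupp.mem_support_iff.mp hi)
      rw [this]
      rw [show (algebraMap K (MvPolynomial (Fin n) K)) c = C c from rfl]
      exact monomial_eq.symm
    · push_neg at hcond
      obtain ⟨i, hiS, hine⟩ := hcond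
      have : (w.prod fun i e => (if i ∈ S then (0 : MvPolynomial (Fin n) K) else X i) ^ e) = 0 := by
        apply Finset.prod_eq_zero (Finsupp.mem_support_iff.mpr hine)
        show (if i ∈ S then (0 : MvPolynomial (Fin n) K) else X i) ^ w i = 0
        rw [if_pos hiS, zero_pow hine]
      rw [this, mul_zero]
  have hker : RingHom.ker φ = Ideal.span ((X : Fin n → MvPolynomial (Fin n) K) '' S) := by
    apply le_antisymm
    · intro f hf
      rw [RingHom.mem_ker] at hf
      rw [mem_ideal_span_X_image]
      by_contra hcon
      push_neg at hcon
      obtain ⟨w, hw, hwS⟩ := hcon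
      have hcoeff : coeff w (φ f) = coeff w f := by
        conv_lhs => rw [f.as_sum, map_sum]
        rw [coeff_sum]
        rw [Finset.sum_eq_single w]
        · rw [hmono, if_pos hwS, coeff_monomial, if_pos rfl]
        · intro w' hw' hne
          rw [hmono]
          split_ifs
          · rw [coeff_monomial, if_neg hne]
          · rw [coeff_zero]
        · intro h; exact absurd hw h
      rw [hf, coeff_zero] at hcoeff
      exact (mem_support_iff.mp hw) hcoeff.symm
    · rw [Ideal.span_le]
      rintro _ ⟨x, hx, rfl⟩
      rw [SetLike.mem_coe, RingHom.mem_ker]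
      show (aeval fun i => if i ∈ S then 0 else X i) (X x) = 0
      rw [aeval_X, if_pos hx]
  rw [← hker]
  exact RingHom.ker_isPrime φ


lemma lemC (E : Set (Fin n →₀ ℕ)) (T : Set (Fin n)) (g : MvPolynomial (Fin n) K)
    (hp : (Ideal.span ((X : Fin n → MvPolynomial (Fin n) K) '' T)).IsPrime)
    (heq : Ideal.span ((X : Fin n → MvPolynomial (Fin n) K) '' T)
      = (q K E).colon (Ideal.span {g})) :
    ∃ m : Fin n →₀ ℕ, monomial m (1 : K) ∉ q K E ∧
      Ideal.span ((X : Fin n → MvPolynomial (Fin n) K) '' T)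
        = (q K E).colon (Ideal.span {monomial m (1 : K)}) := by
  classical
  set p := Ideal.span ((X : Fin n → MvPolynomial (Fin n) K) '' T) with hpdef
  have part1 : ∀ w ∈ g.support, p ≤ (q K E).colon (Ideal.span {monomial w (1 : K)}) := by
    intro w hw
    rw [hpdef, Ideal.span_le]
    rintro _ ⟨x, hx, rfl⟩
    rw [SetLike.mem_coe, Ideal.mem_colon_span_singleton]
    have hXg : (X x : MvPolynomial (Fin n) K) * g ∈ q K E := by
      have hXp : (X x : MvPolynomial (Fin n) K) ∈ p := Ideal.subset_span ⟨x, hx, rfl⟩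
      rw [heq] at hXp
      exact Ideal.mem_colon_span_singleton.mp hXp
    have hsup : Finsupp.single x 1 + w ∈ ((X x : MvPolynomial (Fin n) K) * g).support := by
      rw [mem_support_iff, X, coeff_monomial_mul, one_mul]
      exact mem_support_iff.mp hw
    obtain ⟨e, he, hle⟩ := mem_q.mp hXg _ hsup
    rw [X_mul_mono]
    exact mono_mem_q.mpr ⟨e, he, hle⟩
  by_cases hex : ∃ w ∈ g.support, monomial w (1 : K) ∉ q K E ∧
      (q K E).colon (Ideal.span {monomial w (1 : K)}) ≤ p
  · obtain ⟨w, hw, hw1, hw2⟩ := hex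
    exact ⟨w, hw1, le_antisymm (part1 w hw) hw2⟩
  · exfalso
    push_neg at hex
    have hch : ∀ w ∈ g.support, ∃ v : Fin n →₀ ℕ,
        (∀ i ∈ T, v i = 0) ∧ monomial (v + w) (1 : K) ∈ q K E := by
      intro w hw
      by_cases hwq : monomial w (1 : K) ∈ q K E
      · exact ⟨0, fun i _ => rfl, by rwa [zero_add]⟩
      · obtain ⟨r, hrc, hrp⟩ := SetLike.not_le_iff_exists.mp (hex w hw hwq)
        have : ¬ ∀ m ∈ r.support, ∃ i ∈ T, m i ≠ 0 := by
          intro hcon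
          exact hrp (by rw [hpdef]; exact mem_ideal_span_X_image.mpr hcon)
        push_neg at this
        obtain ⟨v, hv, hvT⟩ := this
        refine ⟨v, hvT, ?_⟩
        have hrm : r * monomial w (1 : K) ∈ q K E := Ideal.mem_colon_span_singleton.mp hrc
        have hsup : v + w ∈ (r * monomial w (1 : K)).support := by
          rw [mem_support_iff, coeff_mul_monomial, mul_one]
          exact mem_support_iff.mp hv
        obtain ⟨e, he, hle⟩ := mem_q.mp hrm _ hsup
        exact mono_mem_q.mpr ⟨e, he, hle⟩
    choose! v hv1 hv2 using hch
    set V : Fin n →₀ ℕ := ∑ w ∈ g.support, v w with hVdef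
    have hcp : monomial V (1 : K) ∈ p := by
      rw [heq, Ideal.mem_colon_span_singleton]
      rw [mul_comm]
      rw [mem_q]
      intro z hz
      rw [mem_support_iff, coeff_mul_monomial'] at hz
      split_ifs at hz with hVz
      · rw [mul_one] at hz
        set w := z - V with hwdef
        have hwsup : w ∈ g.support := mem_support_iff.mpr hz
        obtain ⟨e, he, hle⟩ := mono_mem_q.mp (hv2 w hwsup)
        refine ⟨e, he, le_trans hle ?_⟩
        have hvV : v w ≤ V := by
          rw [hVdef]
          exact Finset.single_le_sum (fun i _ => zero_le) hwsup
        calc v w + w ≤ V + w := add_le_add_left hvV w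
        _ = V + (z - V) := rfl
        _ = z := add_tsub_cancel_of_le hVz
      · exact absurd rfl hz
    have hcnp : monomial V (1 : K) ∉ p := by
      rw [hpdef]
      intro hmem
      rw [mem_ideal_span_X_image] at hmem
      obtain ⟨i, hiT, hine⟩ := hmem V (by
        rw [mem_support_iff, coeff_monomial, if_pos rfl]; exact one_ne_zero)
      apply hine
      rw [hVdef, Finset.sum_apply']
      exact Finset.sum_eq_zero fun w hw => hv1 w hw i hiT
    exact hcnp hcp

lemma lemB (T : Set (Fin n)) (yv : Fin n) (a : ℕ) (ha : 1 ≤ a)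
    (SJ : Set (Fin n →₀ ℕ)) (hSJ : ∀ e ∈ SJ, e yv = 0) (m : Fin n →₀ ℕ)
    (hp : (Ideal.span ((X : Fin n → MvPolynomial (Fin n) K) '' T)).IsPrime)
    (heq : Ideal.span ((X : Fin n → MvPolynomial (Fin n) K) '' T)
      = (q K (SJ ∪ {Finsupp.single yv a})).colon (Ideal.span {monomial m (1 : K)})) :
    Ideal.span ((X : Fin n → MvPolynomial (Fin n) K) '' (T \ {yv})) ∈
      associatedPrimes (MvPolynomial (Fin n) K) (MvPolynomial (Fin n) K ⧸ q K SJ) := by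
  classical
  set p := Ideal.span ((X : Fin n → MvPolynomial (Fin n) K) '' T) with hpdef
  set Q := q K (SJ ∪ {Finsupp.single yv a}) with hQdef
  have hm : monomial m (1 : K) ∉ Q := by
    intro hmem
    apply hp.ne_top
    rw [Ideal.eq_top_iff_one, heq, Ideal.mem_colon_span_singleton, one_mul]
    exact hmem
  have hQp : Q ≤ p := by
    intro r hr
    rw [heq, Ideal.mem_colon_span_singleton]
    exact Ideal.mul_mem_right _ _ hr
  -- yv ∈ T
  have hXyv : (X yv : MvPolynomial (Fin n) K) ∈ p := by
    have h1 : monomial (Finsupp.single yv a) (1 : K) ∈ Q :=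
      mono_mem_q.mpr ⟨Finsupp.single yv a, Or.inr rfl, le_refl _⟩
    have h2 : (X yv : MvPolynomial (Fin n) K) ^ a ∈ p := by
      rw [X_pow_eq_monomial]; exact hQp h1
    exact hp.mem_of_pow_mem a h2
  have hyT : yv ∈ T := by
    rw [hpdef, mem_ideal_span_X_image] at hXyv
    obtain ⟨i, hiT, hine⟩ := hXyv _ (by
      rw [support_X, Finset.mem_singleton])
    rw [Finsupp.single_apply] at hine
    split_ifs at hine with h
    · exact h ▸ hiT
    · exact absurd rfl hine
  -- a = m yv + 1
  have hXm : ∀ x, (X x : MvPolynomial (Fin n) K) ∈ p →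
      ∃ e ∈ SJ ∪ {Finsupp.single yv a}, e ≤ Finsupp.single x 1 + m := by
    intro x hx
    have : (X x : MvPolynomial (Fin n) K) * monomial m 1 ∈ Q := by
      rw [heq, Ideal.mem_colon_span_singleton] at hx
      exact hx
    rw [X_mul_mono] at this
    exact mono_mem_q.mp this
  have hma : a = m yv + 1 := by
    have h1 : ¬ m yv ≥ a := by
      intro hge
      apply hm
      exact mono_mem_q.mpr ⟨Finsupp.single yv a, Or.inr rfl, Finsupp.single_le_iff.mpr hge⟩
    obtain ⟨e, he, hle⟩ := hXm yv hXyv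
    rcases he with heSJ | hesingle
    · exfalso
      apply hm
      refine mono_mem_q.mpr ⟨e, Or.inl heSJ, ?_⟩
      intro i
      rcases eq_or_ne i yv with rfl | hne
      · rw [hSJ e heSJ]; exact zero_le
      · have := hle i
        rwa [Finsupp.add_apply, Finsupp.single_apply, if_neg (fun h => hne h.symm),
          zero_add] at this
    · rw [Set.mem_singleton_iff] at hesingle
      subst hesingle
      have := hle yv
      rw [Finsupp.single_apply, if_pos rfl, Finsupp.add_apply, Finsupp.single_apply,
        if_pos rfl] at this
      omega
  set m' := m.erase yv with hm'def
  have hm'ne : ∀ i, i ≠ yv → m' i = m i := fun i hi => Finsupp.erase_ne hi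
  have hm'yv : m' yv = 0 := Finsupp.erase_same
  have hcol' : Ideal.span ((X : Fin n → MvPolynomial (Fin n) K) '' (T \ {yv}))
      = (q K SJ).colon (Ideal.span {monomial m' (1 : K)}) := by
    apply le_antisymm
    · rw [Ideal.span_le]
      rintro _ ⟨x, hx, rfl⟩
      obtain ⟨hxT, hxney⟩ := hx
      rw [Set.mem_singleton_iff] at hxney
      rw [SetLike.mem_coe, Ideal.mem_colon_span_singleton, X_mul_mono]
      have hXx : (X x : MvPolynomial (Fin n) K) ∈ p := by
        rw [hpdef]; exact Ideal.subset_span ⟨x, hxT, rfl⟩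
      obtain ⟨e, he, hle⟩ := hXm x hXx
      rcases he with heSJ | hesingle
      · refine mono_mem_q.mpr ⟨e, heSJ, ?_⟩
        intro i
        rcases eq_or_ne i yv with rfl | hne
        · rw [hSJ e heSJ]; exact zero_le
        · have := hle i
          rw [Finsupp.add_apply] at this ⊢
          rwa [hm'ne i hne]
      · exfalso
        rw [Set.mem_singleton_iff] at hesingle
        subst hesingle
        have := hle yv
        rw [Finsupp.single_apply, if_pos rfl, Finsupp.add_apply, Finsupp.single_apply,
          if_neg hxney, zero_add] at this
        omega
    · intro r hr
      rw [Ideal.mem_colon_span_singleton] at hr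
      rw [mem_ideal_span_X_image]
      intro w hw
      by_contra hcon
      push_neg at hcon
      have hsup : w + m' ∈ (r * monomial m' (1 : K)).support := by
        rw [mem_support_iff, coeff_mul_monomial, mul_one]
        exact mem_support_iff.mp hw
      obtain ⟨e, he, hle⟩ := mem_q.mp hr _ hsup
      set w' := w.erase yv with hw'def
      have hw'p : monomial w' (1 : K) ∈ p := by
        rw [heq, Ideal.mem_colon_span_singleton, monomial_mul, mul_one]
        refine mono_mem_q.mpr ⟨e, Or.inl he, ?_⟩
        intro i
        rcases eq_or_ne i yv with rfl | hne
        · rw [hSJ e he]; exact zero_le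
        · have := hle i
          rw [Finsupp.add_apply] at this ⊢
          rw [Finsupp.erase_ne hne]
          rwa [hm'ne i hne] at this
      have hw'np : monomial w' (1 : K) ∉ p := by
        rw [hpdef, mem_ideal_span_X_image]
        intro hmem
        obtain ⟨i, hiT, hine⟩ := hmem w' (by
          rw [mem_support_iff, coeff_monomial, if_pos rfl]; exact one_ne_zero)
        apply hine
        rcases eq_or_ne i yv with rfl | hne
        · exact Finsupp.erase_same
        · rw [Finsupp.erase_ne hne]
          exact hcon i ⟨hiT, hne⟩
      exact hw'np hw'p
  exact (mem_ass_quot_iff _ _).mpr ⟨isPrime_span_X _, monomial m' (1 : K), hcol'⟩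

lemma step (E : Set (Fin n →₀ ℕ)) (T : Set (Fin n)) (yv : Fin n) (a : ℕ) (ha : 1 ≤ a)
    (SJ : Set (Fin n →₀ ℕ)) (hSJ : ∀ e ∈ SJ, e yv = 0)
    (hsum : q K E + q K {Finsupp.single yv a} = q K SJ + q K {Finsupp.single yv a})
    (hass : Ideal.span ((X : Fin n → MvPolynomial (Fin n) K) '' (T \ {yv})) ∉
      associatedPrimes (MvPolynomial (Fin n) K) (MvPolynomial (Fin n) K ⧸ q K SJ))
    (h : Ideal.span ((X : Fin n → MvPolynomial (Fin n) K) '' T) ∈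
      associatedPrimes (MvPolynomial (Fin n) K) (MvPolynomial (Fin n) K ⧸ q K E)) :
    Ideal.span ((X : Fin n → MvPolynomial (Fin n) K) '' T) ∈
      associatedPrimes (MvPolynomial (Fin n) K) (MvPolynomial (Fin n) K ⧸
        (q K E).colon (Ideal.span {monomial (Finsupp.single yv a) (1 : K)})) := by
  obtain ⟨hp, u, hu⟩ := (mem_ass_quot_iff _ _).mp h
  rcases dichotomy (q K E) _ hp u (monomial (Finsupp.single yv a) 1) hu with ⟨b, hb⟩ | h2
  · refine (mem_ass_quot_iff _ _).mpr ⟨hp, b, ?_⟩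
    rw [colon_colon]
    exact hb
  · exfalso
    apply hass
    have hQeq : q K (SJ ∪ {Finsupp.single yv a})
        = q K E + Ideal.span {monomial (Finsupp.single yv a) (1 : K)} := by
      rw [q_union, ← q_singleton, ← hsum]
    have h2' : Ideal.span ((X : Fin n → MvPolynomial (Fin n) K) '' T)
        = (q K (SJ ∪ {Finsupp.single yv a})).colon (Ideal.span {u}) := by
      rw [hQeq]; exact h2
    obtain ⟨mw, hmw, hcolw⟩ := lemC (SJ ∪ {Finsupp.single yv a}) T u hp h2'
    exact lemB T yv a ha SJ hSJ mw hp hcolw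

lemma forward (E : Set (Fin n →₀ ℕ)) (T : Set (Fin n)) {s : ℕ} (y : Fin s → Fin n)
    (hy : Function.Injective y) (α : Fin s → ℕ) (hα : ∀ i, 1 ≤ α i)
    (SJ : Fin s → Set (Fin n →₀ ℕ)) (hSJ : ∀ i, ∀ e ∈ SJ i, e (y i) = 0)
    (hIJ : ∀ i, q K E + q K {Finsupp.single (y i) (α i)}
      = q K (SJ i) + q K {Finsupp.single (y i) (α i)})
    (hass : ∀ i, Ideal.span ((X : Fin n → MvPolynomial (Fin n) K) '' (T \ {y i})) ∉
      associatedPrimes (MvPolynomial (Fin n) K) (MvPolynomial (Fin n) K ⧸ q K (SJ i)))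
    (h : Ideal.span ((X : Fin n → MvPolynomial (Fin n) K) '' T) ∈
      associatedPrimes (MvPolynomial (Fin n) K) (MvPolynomial (Fin n) K ⧸ q K E))
    (F : Finset (Fin s)) :
    Ideal.span ((X : Fin n → MvPolynomial (Fin n) K) '' T) ∈
      associatedPrimes (MvPolynomial (Fin n) K) (MvPolynomial (Fin n) K ⧸
        (q K E).colon (Ideal.span
          {monomial (∑ i ∈ F, Finsupp.single (y i) (α i)) (1 : K)})) := by
  classical
  induction F using Finset.induction with
  | empty =>
    rw [Finset.sum_empty]
    rw [show (monomial (0 : Fin n →₀ ℕ) (1 : K)) = 1 by simp]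
    rwa [colon_one]
  | @insert j F hj ih =>
    set γ : Fin n →₀ ℕ := ∑ i ∈ F, Finsupp.single (y i) (α i) with hγdef
    have hγyj : γ (y j) = 0 := by
      rw [hγdef, Finset.sum_apply']
      refine Finset.sum_eq_zero fun i hi => ?_
      exact Finsupp.single_eq_of_ne (fun hc => hj ((hy hc) ▸ hi))
    have hsub : Finsupp.single (y j) (α j) - γ = Finsupp.single (y j) (α j) := by
      ext i
      rw [Finsupp.tsub_apply]
      rcases eq_or_ne i (y j) with rfl | hne
      · rw [hγyj]; exact tsub_zero _
      · rw [Finsupp.single_eq_of_ne hne]; exact zero_tsub _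
    have hcolon_eq : ∀ Es : Set (Fin n →₀ ℕ),
        (q K Es + q K {Finsupp.single (y j) (α j)}).colon
            (Ideal.span {monomial γ (1 : K)})
          = q K ((fun e => e - γ) '' Es) + q K {Finsupp.single (y j) (α j)} := by
      intro Es
      rw [← q_union, q_colon_mono, Set.image_union, Set.image_singleton, hsub, q_union]
    have hsum' : q K ((fun e => e - γ) '' E) + q K {Finsupp.single (y j) (α j)}
        = q K ((fun e => e - γ) '' (SJ j)) + q K {Finsupp.single (y j) (α j)} := by
      rw [← hcolon_eq E, hIJ j, hcolon_eq (SJ j)]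
    have hSJ' : ∀ e ∈ (fun e => e - γ) '' (SJ j), e (y j) = 0 := by
      rintro _ ⟨e, he, rfl⟩
      rw [Finsupp.tsub_apply, hSJ j e he]; exact zero_tsub _
    have hass' : Ideal.span ((X : Fin n → MvPolynomial (Fin n) K) '' (T \ {y j})) ∉
        associatedPrimes (MvPolynomial (Fin n) K)
          (MvPolynomial (Fin n) K ⧸ q K ((fun e => e - γ) '' (SJ j))) := by
      intro hmem
      apply hass j
      rw [← q_colon_mono] at hmem
      exact ass_of_ass_colon hmem
    have ih' := ih
    rw [show (q K E).colon (Ideal.span {monomial γ (1 : K)})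
        = q K ((fun e => e - γ) '' E) from q_colon_mono E γ] at ih'
    have hstep := step ((fun e => e - γ) '' E) T (y j) (α j) (hα j)
      ((fun e => e - γ) '' (SJ j)) hSJ' hsum' hass' ih'
    rw [show q K ((fun e => e - γ) '' E)
        = (q K E).colon (Ideal.span {monomial γ (1 : K)}) from (q_colon_mono E γ).symm,
      colon_colon, monomial_mul, one_mul] at hstep
    rwa [Finset.sum_insert hj, add_comm (Finsupp.single (y j) (α j)) γ]

lemma prod_mono {ι : Type*} (F : Finset ι) (d : ι → (Fin n →₀ ℕ)) :
    (∏ i ∈ F, monomial (d i) (1 : K)) = monomial (∑ i ∈ F, d i) (1 : K) := by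
  classical
  induction F using Finset.induction with
  | empty => simp
  | @insert j F hj ih =>
    rw [Finset.prod_insert hj, Finset.sum_insert hj, ih, monomial_mul, one_mul]

end MICC

theorem maximal_ideal_criterion_colon_iff
    {K : Type*} [Field K] {n s : ℕ}
    (I : Ideal (MvPolynomial (Fin n) K)) (hI : IsMonomialIdeal I)
    (T : Set (Fin n)) (t : ℕ) (ht : 1 ≤ t)
    (y : Fin s → Fin n) (hy : Function.Injective y)
    (α : Fin s → ℕ) (hα : ∀ i, 1 ≤ α i)
    (J : Fin s → Ideal (MvPolynomial (Fin n) K))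
    (hJ : ∀ i, MonomialIdealAvoiding {y i} (J i))
    (hIJ : ∀ i, I ^ t + Ideal.span {(X (y i) : MvPolynomial (Fin n) K) ^ α i}
        = J i + Ideal.span {(X (y i) : MvPolynomial (Fin n) K) ^ α i})
    (hass : ∀ i,
      Ideal.span ((X : Fin n → MvPolynomial (Fin n) K) '' (T \ {y i})) ∉
        associatedPrimes (MvPolynomial (Fin n) K)
          (MvPolynomial (Fin n) K ⧸ J i)) :
    Ideal.span ((X : Fin n → MvPolynomial (Fin n) K) '' T) ∈
        associatedPrimes (MvPolynomial (Fin n) K)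
          (MvPolynomial (Fin n) K ⧸ I ^ t) ↔
      Ideal.span ((X : Fin n → MvPolynomial (Fin n) K) '' T) ∈
        associatedPrimes (MvPolynomial (Fin n) K)
          (MvPolynomial (Fin n) K ⧸
            (I ^ t).colon (Ideal.span
              {∏ i, (X (y i) : MvPolynomial (Fin n) K) ^ α i})) := by
  classical
  obtain ⟨S0, hS0⟩ := hI
  obtain ⟨E, hE⟩ : ∃ E, I ^ t = MICC.q K E := by
    have hIq : I = MICC.q K S0 := hS0
    rw [hIq]
    exact MICC.pow_q S0 t ht
  choose SJ hSJ0 hSJeq using hJ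
  have hJq : ∀ i, J i = MICC.q K (SJ i) := fun i => hSJeq i
  have hprod : (∏ i, (X (y i) : MvPolynomial (Fin n) K) ^ α i)
      = monomial (∑ i, Finsupp.single (y i) (α i)) (1 : K) := by
    rw [show (∏ i, (X (y i) : MvPolynomial (Fin n) K) ^ α i)
      = ∏ i, monomial (Finsupp.single (y i) (α i)) (1 : K) from
        Finset.prod_congr rfl fun i _ => X_pow_eq_monomial]
    exact MICC.prod_mono Finset.univ _
  have hIJ' : ∀ i, MICC.q K E + MICC.q K {Finsupp.single (y i) (α i)}
      = MICC.q K (SJ i) + MICC.q K {Finsupp.single (y i) (α i)} := by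
    intro i
    have h0 := hIJ i
    rw [hE, hJq i, X_pow_eq_monomial, ← MICC.q_singleton] at h0
    exact h0
  have hass' : ∀ i,
      Ideal.span ((X : Fin n → MvPolynomial (Fin n) K) '' (T \ {y i})) ∉
        associatedPrimes (MvPolynomial (Fin n) K)
          (MvPolynomial (Fin n) K ⧸ MICC.q K (SJ i)) := by
    intro i
    rw [← hJq i]
    exact hass i
  constructor
  · intro h
    have hfwd := MICC.forward E T y hy α hα SJ
      (fun i e he => hSJ0 i e he (y i) rfl) hIJ' hass' (by rwa [hE] at h) Finset.univ
    rw [hE, hprod]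
    exact hfwd
  · intro h
    exact MICC.ass_of_ass_colon h
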